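/- Let F be a field with char F ≠ 2. (a) In 𝔍(0), the 1-dimensional subspace I = F·((1/2)𝔞 + (1/2)𝔟 + σ) is an ideal, I is contained in every nonzero ideal of 𝔍(0), and in the quotient 𝔍(0)/I the images of 𝔞 and 𝔟 satisfy 𝔞·𝔟 ∈ I and span the quotient, so 𝔍(0)/I ≅ F ⊕ F with componentwise product. (b) In 𝔍(1), σ annihilates the whole algebra (σ·𝔍(1) = 0), and the only ideals of 𝔍(1) other than {0} and 𝔍(1) are F·σ and F·(𝔞−𝔟) + F·σ. -/

import Mathlib

namespace JordanHalf

variable {F : Type*} [Field F]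

/-- The multiplication of the 3-dimensional algebra `𝔍(α)` with respect to the basis
`𝔞 = ![1,0,0]`, `𝔟 = ![0,1,0]`, `σ = ![0,0,1]`. -/
def JmulFun (α : F) (u v : Fin 3 → F) : Fin 3 → F :=
  ![u 0 * v 0 + (u 0 * v 1 + u 1 * v 0) / 2 + (α - 1) / 2 * (u 0 * v 2 + u 2 * v 0),
    u 1 * v 1 + (u 0 * v 1 + u 1 * v 0) / 2 + (α - 1) / 2 * (u 1 * v 2 + u 2 * v 1),
    (u 0 * v 1 + u 1 * v 0) + (α - 1) / 2 * (u 2 * v 2)]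

/-- `I` is an ideal for the multiplication `JmulFun α`. -/
def IsIdeal (α : F) (I : Submodule F (Fin 3 → F)) : Prop :=
  ∀ u : Fin 3 → F, ∀ x ∈ I, JmulFun α u x ∈ I

end JordanHalf

open JordanHalf

section Aux

variable {F : Type*} [Field F]

private lemma ba_mul (x : Fin 3 → F) :
    JmulFun 0 ![0,1,0] (JmulFun 0 ![1,0,0] x)
      = (x 0 + x 1 / 2 - x 2 / 2) • ![(2:F)⁻¹, 2⁻¹, 1] := by
  funext i; fin_cases i <;> simp [JmulFun] <;> ring

private lemma ab_mul (x : Fin 3 → F) :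
    JmulFun 0 ![1,0,0] (JmulFun 0 ![0,1,0] x)
      = (x 1 + x 0 / 2 - x 2 / 2) • ![(2:F)⁻¹, 2⁻¹, 1] := by
  funext i; fin_cases i <;> simp [JmulFun] <;> ring

private lemma w_mem_f {P : Submodule F (Fin 3 → F)} (hP : IsIdeal (0:F) P)
    {x : Fin 3 → F} (hx : x ∈ P) (hfx : x 0 + x 1 / 2 - x 2 / 2 ≠ 0) :
    (![(2:F)⁻¹, 2⁻¹, 1] : Fin 3 → F) ∈ P := by
  have h1 := hP ![0,1,0] _ (hP ![1,0,0] x hx)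
  rw [ba_mul] at h1
  have h2 := P.smul_mem (x 0 + x 1 / 2 - x 2 / 2)⁻¹ h1
  rwa [smul_smul, inv_mul_cancel₀ hfx, one_smul] at h2

private lemma w_mem_g {P : Submodule F (Fin 3 → F)} (hP : IsIdeal (0:F) P)
    {x : Fin 3 → F} (hx : x ∈ P) (hgx : x 1 + x 0 / 2 - x 2 / 2 ≠ 0) :
    (![(2:F)⁻¹, 2⁻¹, 1] : Fin 3 → F) ∈ P := by
  have h1 := hP ![1,0,0] _ (hP ![0,1,0] x hx)
  rw [ab_mul] at h1
  have h2 := P.smul_mem (x 1 + x 0 / 2 - x 2 / 2)⁻¹ h1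
  rwa [smul_smul, inv_mul_cancel₀ hgx, one_smul] at h2

/-- The linear map underlying the isomorphism `𝔍(0)/I ≃ F × F`. -/
private def phiF : (Fin 3 → F) →ₗ[F] F × F where
  toFun x := (x 0 - x 2 / 2, x 1 - x 2 / 2)
  map_add' x y := by simp [Prod.ext_iff]; constructor <;> ring
  map_smul' c x := by simp [Prod.ext_iff]; constructor <;> ring

end Aux

set_option maxHeartbeats 2000000 in
/-- **Theorem (ideals of `𝔍(0)` and `𝔍(1)`).**
(a) In `𝔍(0)` the line `I = F·(½𝔞 + ½𝔟 + σ)` is an ideal contained in every nonzero ideal;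
the images of `𝔞` and `𝔟` in the quotient `𝔍(0)/I` satisfy `𝔞⬝𝔟 ∈ I` and the quotient is
isomorphic to `F ⊕ F` with componentwise product, via an isomorphism sending `𝔞`, `𝔟` to
`(1,0)`, `(0,1)`.
(b) In `𝔍(1)`, `σ` annihilates the whole algebra, and the only ideals of `𝔍(1)` besides `⊥`
and `⊤` are `F·σ` and `F·(𝔞 − 𝔟) + F·σ`. -/
theorem Jalg_zero_and_one_ideals {F : Type*} [Field F] (hchar : (2 : F) ≠ 0) :
    -- (a) the ideal `I` of `𝔍(0)`
    (IsIdeal (0 : F) (Submodule.span F {(![2⁻¹, 2⁻¹, 1] : Fin 3 → F)}) ∧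
      (∀ P : Submodule F (Fin 3 → F), IsIdeal (0 : F) P → P ≠ ⊥ →
        Submodule.span F {(![2⁻¹, 2⁻¹, 1] : Fin 3 → F)} ≤ P) ∧
      JmulFun (0 : F) ![1, 0, 0] ![0, 1, 0] ∈
        Submodule.span F {(![2⁻¹, 2⁻¹, 1] : Fin 3 → F)} ∧
      (∃ e : ((Fin 3 → F) ⧸ Submodule.span F {(![2⁻¹, 2⁻¹, 1] : Fin 3 → F)}) ≃ₗ[F] (F × F),
        e (Submodule.Quotient.mk ![1, 0, 0]) = (1, 0) ∧
        e (Submodule.Quotient.mk ![0, 1, 0]) = (0, 1) ∧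
        ∀ u v : Fin 3 → F,
          e (Submodule.Quotient.mk (JmulFun (0 : F) u v)) =
            e (Submodule.Quotient.mk u) * e (Submodule.Quotient.mk v))) ∧
    -- (b) `𝔍(1)`
    ((∀ u : Fin 3 → F, JmulFun (1 : F) u ![0, 0, 1] = 0) ∧
      IsIdeal (1 : F) (Submodule.span F {(![0, 0, 1] : Fin 3 → F)}) ∧
      Submodule.span F {(![0, 0, 1] : Fin 3 → F)} ≠ ⊥ ∧
      Submodule.span F {(![0, 0, 1] : Fin 3 → F)} ≠ ⊤ ∧
      IsIdeal (1 : F) (Submodule.span F {![1, -1, 0], ![0, 0, 1]}) ∧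
      Submodule.span F {(![1, -1, 0] : Fin 3 → F), ![0, 0, 1]} ≠ ⊥ ∧
      Submodule.span F {(![1, -1, 0] : Fin 3 → F), ![0, 0, 1]} ≠ ⊤ ∧
      ∀ P : Submodule F (Fin 3 → F), IsIdeal (1 : F) P →
        P = ⊥ ∨ P = ⊤ ∨ P = Submodule.span F {![0, 0, 1]} ∨
          P = Submodule.span F {![1, -1, 0], ![0, 0, 1]}) := by
  have h2 : (2:F) * 2⁻¹ = 1 := mul_inv_cancel₀ hchar
  constructor
  · -- part (a)
    refine ⟨?_, ?_, ?_, ?_⟩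
    · -- I is an ideal
      intro u x hx
      obtain ⟨c, hc⟩ := Submodule.mem_span_singleton.mp hx
      rw [← hc]
      have key : JmulFun 0 u (c • ![(2:F)⁻¹, 2⁻¹, 1])
          = (c * (u 0 + u 1 - u 2) / 2) • ![(2:F)⁻¹, 2⁻¹, 1] := by
        funext i; fin_cases i <;> simp [JmulFun] <;> ring
      rw [key]
      exact Submodule.smul_mem _ _ (Submodule.mem_span_singleton_self _)
    · -- minimality
      intro P hP hne
      rw [Submodule.span_le, Set.singleton_subset_iff]
      obtain ⟨x, hx, hx0⟩ := (Submodule.ne_bot_iff P).mp hne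
      by_cases hf : x 0 + x 1 / 2 - x 2 / 2 = 0
      · by_cases hg : x 1 + x 0 / 2 - x 2 / 2 = 0
        · -- hard case : x = x0 • (1,1,3)
          have hf' := hf
          have hg' := hg
          field_simp [hchar] at hf' hg'
          have h01 : x 1 = x 0 := by linear_combination hg' - hf'
          have hx0' : x 0 ≠ 0 := by
            intro h0
            apply hx0
            have hx1' : x 1 = 0 := h01.trans h0
            have hx2 : x 2 = 0 := by linear_combination -hf' + 2*h0 + hx1'
            funext i; fin_cases i
            · exact h0
            · exact hx1'
            · exact hx2
          have hyP : JmulFun 0 ![1,0,0] x ∈ P := hP ![1,0,0] x hx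
          apply w_mem_f hP hyP
          have hy0 : JmulFun 0 ![1,0,0] x 0 = x 0 + x 1 / 2 - x 2 / 2 := by
            simp [JmulFun]; try ring
          have hy1 : JmulFun 0 ![1,0,0] x 1 = x 1 / 2 := by simp [JmulFun]; try ring
          have hy2 : JmulFun 0 ![1,0,0] x 2 = x 1 := by simp [JmulFun]; try ring
          rw [hy0, hy1, hy2, hf]
          intro hcon
          field_simp [hchar] at hcon
          have hmul : (2:F) * x 1 = 0 := by linear_combination -2 * hcon
          have hx1 : x 1 = 0 := (mul_eq_zero.mp hmul).resolve_left hchar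
          exact hx0' (h01.symm.trans hx1)
        · exact w_mem_g hP hx hg
      · exact w_mem_f hP hx hf
    · -- a·b ∈ I
      have key : JmulFun (0:F) ![1,0,0] ![0,1,0] = ![(2:F)⁻¹, 2⁻¹, 1] := by
        funext i; fin_cases i <;> simp [JmulFun] <;> ring
      rw [key]
      exact Submodule.mem_span_singleton_self _
    · -- quotient iso
      set I : Submodule F (Fin 3 → F) := Submodule.span F {![2⁻¹, 2⁻¹, 1]} with hI
      have hle : I ≤ LinearMap.ker (phiF (F := F)) := by
        rw [hI, Submodule.span_le, Set.singleton_subset_iff]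
        simp [phiF, Prod.ext_iff, LinearMap.mem_ker]
      have hker : LinearMap.ker (phiF (F := F)) ≤ I := by
        intro z hz
        rw [LinearMap.mem_ker] at hz
        have h1 : z 0 - z 2 / 2 = 0 ∧ z 1 - z 2 / 2 = 0 := by
          simpa [phiF, Prod.ext_iff] using hz
        rw [hI]
        apply Submodule.mem_span_singleton.mpr ⟨z 2, ?_⟩
        funext i; fin_cases i
        · simp; linear_combination -h1.1
        · simp; linear_combination -h1.2
        · simp
      set L := Submodule.liftQ I (phiF (F := F)) hle with hL
      have hinj : Function.Injective L :=
        LinearMap.ker_eq_bot.mp (Submodule.ker_liftQ_eq_bot I _ hle hker)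
      have hsurj : Function.Surjective L := by
        intro p
        refine ⟨Submodule.Quotient.mk ![p.1, p.2, 0], ?_⟩
        rw [hL, Submodule.liftQ_apply]
        simp [phiF, Prod.ext_iff]
      have hbij : Function.Bijective L := ⟨hinj, hsurj⟩
      refine ⟨LinearEquiv.ofBijective L hbij, ?_, ?_, ?_⟩
      · rw [LinearEquiv.ofBijective_apply, hL, Submodule.liftQ_apply]
        simp [phiF, Prod.ext_iff]
      · rw [LinearEquiv.ofBijective_apply, hL, Submodule.liftQ_apply]
        simp [phiF, Prod.ext_iff]
      · intro u v
        simp only [LinearEquiv.ofBijective_apply, hL, Submodule.liftQ_apply]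
        simp only [phiF, LinearMap.coe_mk, AddHom.coe_mk, Prod.mk_mul_mk, Prod.ext_iff]
        constructor
        · simp [JmulFun]; ring
        · simp [JmulFun]; ring
  · -- part (b)
    refine ⟨?_, ?_, ?_, ?_, ?_, ?_, ?_, ?_⟩
    · -- σ annihilates
      intro u
      funext i; fin_cases i <;> simp [JmulFun]
    · -- span σ is an ideal
      intro u x hx
      obtain ⟨c, hc⟩ := Submodule.mem_span_singleton.mp hx
      rw [← hc]
      have key : JmulFun 1 u (c • ![(0:F),0,1]) = 0 := by
        funext i; fin_cases i <;> simp [JmulFun]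
      rw [key]; exact zero_mem _
    · -- span σ ≠ ⊥
      intro h
      have := Submodule.span_singleton_eq_bot.mp h
      have h2' := congrFun this 2
      simp at h2'
    · -- span σ ≠ ⊤
      intro h
      have ha : (![1,0,0] : Fin 3 → F) ∈ Submodule.span F {![0,0,1]} := by
        rw [h]; trivial
      obtain ⟨c, hc⟩ := Submodule.mem_span_singleton.mp ha
      have h0 := congrFun hc 0
      simp at h0
    · -- J2 is an ideal
      intro u x hx
      obtain ⟨c, d, hcd⟩ := Submodule.mem_span_pair.mp hx
      rw [← hcd]
      apply Submodule.mem_span_pair.mpr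
      refine ⟨c * (u 0 + u 1) / 2, c * (u 1 - u 0), ?_⟩
      funext i; fin_cases i <;> simp [JmulFun] <;> (try field_simp [hchar]) <;> ring
    · -- J2 ≠ ⊥
      intro h
      have hs : (![0,0,1] : Fin 3 → F) ∈ Submodule.span F {![1,-1,0], ![0,0,1]} :=
        Submodule.subset_span (by simp)
      rw [h] at hs
      rw [Submodule.mem_bot] at hs
      have h2' := congrFun hs 2
      simp at h2'
    · -- J2 ≠ ⊤
      intro h
      have ha : (![1,0,0] : Fin 3 → F) ∈ Submodule.span F {![1,-1,0], ![0,0,1]} := by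
        rw [h]; trivial
      obtain ⟨c, d, hcd⟩ := Submodule.mem_span_pair.mp ha
      have h0 := congrFun hcd 0
      have h1 := congrFun hcd 1
      simp at h0 h1
      rw [h1] at h0
      exact one_ne_zero h0.symm
    · -- classification
      intro P hP
      by_cases htop : ∃ x ∈ P, x 0 + x 1 ≠ 0
      · right; left
        obtain ⟨x, hxP, hsum⟩ := htop
        have keya : (2:F) • JmulFun 1 ![1,0,0] (JmulFun 1 ![1,0,0] x)
            - JmulFun 1 ![1,0,0] x = (x 0 + x 1) • ![(1:F),0,0] := by
          funext i; fin_cases i <;> simp [JmulFun] <;> (try field_simp [hchar]) <;> ring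
        have ha' : (x 0 + x 1) • (![(1:F),0,0]) ∈ P := by
          rw [← keya]
          exact P.sub_mem (P.smul_mem 2 (hP ![1,0,0] _ (hP ![1,0,0] x hxP)))
            (hP ![1,0,0] x hxP)
        have ha : (![(1:F),0,0]) ∈ P := by
          have := P.smul_mem (x 0 + x 1)⁻¹ ha'
          rwa [smul_smul, inv_mul_cancel₀ hsum, one_smul] at this
        have keyb : (2:F) • JmulFun 1 ![0,1,0] (JmulFun 1 ![0,1,0] x)
            - JmulFun 1 ![0,1,0] x = (x 0 + x 1) • ![(0:F),1,0] := by
          funext i; fin_cases i <;> simp [JmulFun] <;> (try field_simp [hchar]) <;> ring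
        have hb' : (x 0 + x 1) • (![(0:F),1,0]) ∈ P := by
          rw [← keyb]
          exact P.sub_mem (P.smul_mem 2 (hP ![0,1,0] _ (hP ![0,1,0] x hxP)))
            (hP ![0,1,0] x hxP)
        have hb : (![(0:F),1,0]) ∈ P := by
          have := P.smul_mem (x 0 + x 1)⁻¹ hb'
          rwa [smul_smul, inv_mul_cancel₀ hsum, one_smul] at this
        have hs : (![(0:F),0,1]) ∈ P := by
          have key3 : JmulFun 1 ![0,1,0] ![1,0,0] - (2:F)⁻¹ • ![(1:F),0,0]
              - (2:F)⁻¹ • ![(0:F),1,0] = ![(0:F),0,1] := by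
            funext i; fin_cases i <;> simp [JmulFun] <;> field_simp [hchar]
          rw [← key3]
          exact P.sub_mem (P.sub_mem (hP ![0,1,0] _ ha) (P.smul_mem _ ha)) (P.smul_mem _ hb)
        rw [eq_top_iff]
        intro v _
        have hv : v = v 0 • ![(1:F),0,0] + v 1 • ![(0:F),1,0] + v 2 • ![(0:F),0,1] := by
          funext i; fin_cases i <;> simp
        rw [hv]
        exact P.add_mem (P.add_mem (P.smul_mem _ ha) (P.smul_mem _ hb)) (P.smul_mem _ hs)
      · push_neg at htop
        by_cases hmid : ∃ x ∈ P, x 0 ≠ 0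
        · right; right; right
          obtain ⟨x, hxP, hx0⟩ := hmid
          have hx1 : x 1 = -x 0 := by linear_combination htop x hxP
          have hsig : (![(0:F),0,1]) ∈ P := by
            have key : JmulFun 1 ![0,1,0] x - JmulFun 1 ![1,0,0] x
                = (2 * x 0) • ![(0:F),0,1] := by
              funext i; fin_cases i <;> simp [JmulFun, hx1] <;> (try field_simp [hchar]) <;> ring
            have h3 := P.sub_mem (hP ![0,1,0] x hxP) (hP ![1,0,0] x hxP)
            rw [key] at h3
            have := P.smul_mem (2 * x 0)⁻¹ h3
            rwa [smul_smul, inv_mul_cancel₀ (mul_ne_zero hchar hx0), one_smul] at this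
          have hab : (![(1:F),-1,0]) ∈ P := by
            have key : JmulFun 1 ![1,0,0] x + JmulFun 1 ![0,1,0] x
                = x 0 • ![(1:F),-1,0] := by
              funext i; fin_cases i <;> simp [JmulFun, hx1] <;> (try field_simp [hchar]) <;> ring
            have h3 := P.add_mem (hP ![1,0,0] x hxP) (hP ![0,1,0] x hxP)
            rw [key] at h3
            have := P.smul_mem (x 0)⁻¹ h3
            rwa [smul_smul, inv_mul_cancel₀ hx0, one_smul] at this
          apply le_antisymm
          · intro z hz
            have hz01 := htop z hz
            apply Submodule.mem_span_pair.mpr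
            refine ⟨z 0, z 2, ?_⟩
            funext i; fin_cases i
            · simp
            · simp; linear_combination -hz01
            · simp
          · rw [Submodule.span_le, Set.insert_subset_iff, Set.singleton_subset_iff]
            exact ⟨hab, hsig⟩
        · push_neg at hmid
          by_cases hbot : P = ⊥
          · left; exact hbot
          · right; right; left
            have hsub : ∀ z ∈ P, z = z 2 • ![(0:F),0,1] := by
              intro z hz
              have h0 := hmid z hz
              have h1 : z 1 = 0 := by linear_combination htop z hz - h0
              funext i; fin_cases i
              · simp [h0]
              · simp [h1]
              · simp
            obtain ⟨z, hzP, hz0⟩ := (Submodule.ne_bot_iff P).mp hbot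
            have hz2 : z 2 ≠ 0 := by
              intro h
              exact hz0 (by rw [hsub z hzP, h, zero_smul])
            have hz1 : z 1 = 0 := by linear_combination htop z hzP - hmid z hzP
            have hsig : (![(0:F),0,1]) ∈ P := by
              have h3 : (z 2)⁻¹ • z ∈ P := P.smul_mem _ hzP
              have h4 : (z 2)⁻¹ • z = ![(0:F),0,1] := by
                funext i; fin_cases i
                · show (z 2)⁻¹ * z 0 = 0
                  rw [hmid z hzP, mul_zero]
                · show (z 2)⁻¹ * z 1 = 0
                  rw [hz1, mul_zero]
                · show (z 2)⁻¹ * z 2 = 1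
                  exact inv_mul_cancel₀ hz2
              rwa [h4] at h3
            apply le_antisymm
            · intro y hy
              rw [hsub y hy]
              exact Submodule.smul_mem _ _ (Submodule.mem_span_singleton_self _)
            · rw [Submodule.span_le, Set.singleton_subset_iff]
              exact hsig
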